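/- Let w₀ > 0 and let k : ℝ → ℝ be differentiable at every point of (0, w₀], with derivative k′ positive on (0, w₀] and antitone on (0, w₀] (i.e. k′(w) ≥ k′(τ) whenever 0 < w ≤ τ ≤ w₀). Then for every w ∈ (0, w₀]: k′(w)·∫_w^{w₀} e^{2(k(w) − k(τ))} dτ ≥ (1 − e^{2(k(w) − k(w₀))})/2. -/

import Mathlib

theorem stmt_17 (w₀ : ℝ) (hw₀ : 0 < w₀) (k k' : ℝ → ℝ)
    (hderiv : ∀ w ∈ Set.Ioc (0 : ℝ) w₀, HasDerivAt k (k' w) w)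
    (hpos : ∀ w ∈ Set.Ioc (0 : ℝ) w₀, 0 < k' w)
    (hanti : ∀ w τ : ℝ, 0 < w → w ≤ τ → τ ≤ w₀ → k' τ ≤ k' w) :
    ∀ w ∈ Set.Ioc (0 : ℝ) w₀,
      (1 - Real.exp (2 * (k w - k w₀))) / 2 ≤
        k' w * ∫ τ in w..w₀, Real.exp (2 * (k w - k τ)) := by
  rintro w ⟨hw0, hww₀⟩
  set c := k w with hc
  set f : ℝ → ℝ := fun τ => Real.exp (2 * (c - k τ)) with hf
  have huIcc : Set.uIcc w w₀ = Set.Icc w w₀ := Set.uIcc_of_le hww₀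
  have hsub : Set.Icc w w₀ ⊆ Set.Ioc 0 w₀ := fun τ hτ => ⟨lt_of_lt_of_le hw0 hτ.1, hτ.2⟩
  have hkcont : ContinuousOn k (Set.Icc w w₀) := fun τ hτ =>
    ((hderiv τ (hsub hτ)).continuousAt).continuousWithinAt
  have hfcont : ContinuousOn f (Set.Icc w w₀) := by
    apply Real.continuous_exp.comp_continuousOn
    exact continuousOn_const.mul (continuousOn_const.sub hkcont)
  have hfint : IntervalIntegrable f MeasureTheory.volume w w₀ := by
    apply ContinuousOn.intervalIntegrable
    rwa [huIcc]
  have hk'anti : AntitoneOn k' (Set.Icc w w₀) := fun a ha b hb hab =>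
    hanti a b (lt_of_lt_of_le hw0 ha.1) hab hb.2
  have hk'int : IntervalIntegrable k' MeasureTheory.volume w w₀ := by
    apply AntitoneOn.intervalIntegrable
    rwa [huIcc]
  have hprodint : IntervalIntegrable (fun τ => k' τ * f τ) MeasureTheory.volume w w₀ :=
    hk'int.mul_continuousOn (by rwa [huIcc])
  have hFTC : ∀ τ ∈ Set.uIcc w w₀,
      HasDerivAt (fun t => -(1/2) * Real.exp (2 * (c - k t))) (k' τ * f τ) τ := by
    intro τ hτ
    rw [huIcc] at hτ
    have h1 : HasDerivAt (fun t => 2 * (c - k t)) (2 * (0 - k' τ)) τ :=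
      ((hasDerivAt_const τ c).sub (hderiv τ (hsub hτ))).const_mul 2
    have h2 := (h1.exp).const_mul (-(1/2) : ℝ)
    refine h2.congr_deriv ?_
    simp [hf]
    ring
  have heq : (∫ τ in w..w₀, k' τ * f τ) = (1 - Real.exp (2 * (c - k w₀))) / 2 := by
    rw [intervalIntegral.integral_eq_sub_of_hasDerivAt hFTC hprodint]
    simp [hc]
    ring
  have hmono : (∫ τ in w..w₀, k' τ * f τ) ≤ ∫ τ in w..w₀, k' w * f τ := by
    apply intervalIntegral.integral_mono_on hww₀ hprodint (hfint.const_mul (k' w))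
    intro τ hτ
    have hk'w : k' τ ≤ k' w := hanti w τ hw0 hτ.1 hτ.2
    have : 0 ≤ f τ := (Real.exp_pos _).le
    exact mul_le_mul_of_nonneg_right hk'w this
  calc (1 - Real.exp (2 * (k w - k w₀))) / 2 = ∫ τ in w..w₀, k' τ * f τ := heq.symm
    _ ≤ ∫ τ in w..w₀, k' w * f τ := hmono
    _ = k' w * ∫ τ in w..w₀, f τ := intervalIntegral.integral_const_mul _ _
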